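/- Let $\Delta : (0,\infty) \to [0,\infty)$ be measurable such that $D(x) := \int_0^x \Delta(u)\,du$ is finite and $D(x)/x$ is bounded on $(0,\infty)$. Then for $v \ge 0$, the condition $\lim_{x\downarrow0} D(x)/x = v$ is equivalent to Karlin's condition $\lim_{x\downarrow0}\, x\int_x^\infty \Delta(u)\,u^{-2}\,du = v$. -/

import Mathlib

open Real Set Filter MeasureTheory
open scoped ENNReal NNReal

private lemma lint_rpow_tail {r : ℝ} (hr : r < -1) {a : ℝ} (ha : 0 < a) :
    ∫⁻ u in Ioi a, ENNReal.ofReal (u ^ r) = ENNReal.ofReal (-a ^ (r + 1) / (r + 1)) := by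
  rw [← MeasureTheory.ofReal_integral_eq_lintegral_ofReal (integrableOn_Ioi_rpow_of_lt hr ha)
    ((ae_restrict_iff' measurableSet_Ioi).2 (ae_of_all _ fun u hu =>
      Real.rpow_nonneg (le_of_lt (ha.trans hu)) r)), integral_Ioi_rpow_of_lt hr ha]

private lemma pow_inv_eq_rpow {u : ℝ} (hu : 0 < u) (n : ℕ) : (u ^ n)⁻¹ = u ^ (-(n:ℝ)) := by
  rw [Real.rpow_neg hu.le, Real.rpow_natCast]

private lemma lint_inv_sq_tail {a : ℝ} (ha : 0 < a) :
    ∫⁻ u in Ioi a, ENNReal.ofReal ((u ^ 2)⁻¹) = ENNReal.ofReal a⁻¹ := by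
  rw [setLIntegral_congr_fun_ae measurableSet_Ioi (ae_of_all _ fun u (hu : a < u) => by
    rw [pow_inv_eq_rpow (ha.trans hu) 2]), lint_rpow_tail (by norm_num) ha]
  norm_num [Real.rpow_neg_one]

private lemma lint_inv_cube_tail {a : ℝ} (ha : 0 < a) :
    ∫⁻ u in Ioi a, ENNReal.ofReal ((u ^ 3)⁻¹) = ENNReal.ofReal ((a ^ 2)⁻¹ / 2) := by
  rw [setLIntegral_congr_fun_ae measurableSet_Ioi (ae_of_all _ fun u (hu : a < u) => by
    rw [pow_inv_eq_rpow (ha.trans hu) 3]), lint_rpow_tail (by norm_num) ha]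
  norm_num

private lemma lint_id_Ioc {a : ℝ} (ha : 0 < a) :
    ∫⁻ u in Ioc 0 a, ENNReal.ofReal u = ENNReal.ofReal (a ^ 2 / 2) := by
  have hi : IntegrableOn (fun u : ℝ => u) (Ioc 0 a) := continuous_id.integrableOn_Ioc
  rw [← MeasureTheory.ofReal_integral_eq_lintegral_ofReal hi
    ((ae_restrict_iff' measurableSet_Ioc).2 (ae_of_all _ fun u hu => hu.1.le))]
  rw [← intervalIntegral.integral_of_le ha.le, integral_id]
  norm_num


private lemma fubiniA (Δ : ℝ → ℝ) (hmeas : Measurable Δ) {x : ℝ} (hx : 0 < x) :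
    ∫⁻ u in Ioi x, ENNReal.ofReal ((u ^ 3)⁻¹) * (∫⁻ t in Ioc 0 u, ENNReal.ofReal (Δ t))
      = (∫⁻ t in Ioc 0 x, ENNReal.ofReal (Δ t)) * ENNReal.ofReal ((x ^ 2)⁻¹ / 2)
        + ∫⁻ t in Ioi x, ENNReal.ofReal (Δ t) * ENNReal.ofReal ((t ^ 2)⁻¹ / 2) := by
  set S : Set (ℝ × ℝ) := {p : ℝ × ℝ | 0 < p.2 ∧ p.2 ≤ p.1} with hS
  set F : ℝ × ℝ → ℝ≥0∞ := fun p =>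
    (Ioi x).indicator (fun u => ENNReal.ofReal ((u ^ 3)⁻¹)) p.1 *
      S.indicator (fun p => ENNReal.ofReal (Δ p.2)) p with hFdef
  have hSmeas : MeasurableSet S :=
    (measurableSet_lt measurable_const measurable_snd).inter
      (measurableSet_le measurable_snd measurable_fst)
  have hF : Measurable F := by
    apply Measurable.mul
    · exact ((ENNReal.measurable_ofReal.comp ((measurable_id.pow_const 3).inv)).indicator
        measurableSet_Ioi).comp measurable_fst
    · exact (ENNReal.measurable_ofReal.comp (hmeas.comp measurable_snd)).indicator hSmeas
  have key : ∀ u t : ℝ, F (u, t) =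
      (Ioi x).indicator (fun u => ENNReal.ofReal ((u ^ 3)⁻¹)) u *
        (Ioc 0 u).indicator (fun t => ENNReal.ofReal (Δ t)) t := by
    intro u t
    simp [hFdef, hS, Set.indicator_apply, Set.mem_Ioc, Set.mem_setOf_eq]
  have e1 : ∀ u : ℝ, ∫⁻ t, F (u, t) =
      (Ioi x).indicator
        (fun u => ENNReal.ofReal ((u ^ 3)⁻¹) * ∫⁻ t in Ioc 0 u, ENNReal.ofReal (Δ t)) u := by
    intro u
    simp_rw [key]
    rw [lintegral_const_mul' _ _ (by by_cases h : u ∈ Ioi x <;> simp [h])]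
    rw [lintegral_indicator measurableSet_Ioc]
    by_cases h : u ∈ Ioi x <;> simp [h]
  have e3 : ∀ t : ℝ, ∫⁻ u, F (u, t) =
      (Ioi 0).indicator
        (fun t => ENNReal.ofReal (Δ t) * ENNReal.ofReal (((max x t) ^ 2)⁻¹ / 2)) t := by
    intro t
    by_cases ht : 0 < t
    · have hru : ∀ u : ℝ, F (u, t) =
          (Ioi x ∩ Ici t).indicator (fun u => ENNReal.ofReal ((u ^ 3)⁻¹)) u
            * ENNReal.ofReal (Δ t) := by
        intro u
        by_cases h1 : x < u <;> by_cases h2 : t ≤ u <;>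
          simp [key, Set.indicator_apply, h1, h2, ht, Set.mem_Ioi, Set.mem_Ici, mul_comm]
      simp_rw [hru]
      rw [lintegral_mul_const' _ _ ENNReal.ofReal_ne_top,
        lintegral_indicator (measurableSet_Ioi.inter measurableSet_Ici)]
      have hset : volume.restrict (Ioi x ∩ Ici t) = volume.restrict (Ioi (max x t)) := by
        rcases le_or_gt t x with h | h
        · have hss : Ioi x ∩ Ici t = Ioi x :=
            Set.inter_eq_self_of_subset_left (fun u (hu : x < u) => le_trans h hu.le)
          rw [hss, max_eq_left h]
        · have hss : Ioi x ∩ Ici t = Ici t :=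
            Set.inter_eq_self_of_subset_right (fun u (hu : t ≤ u) => h.trans_le hu)
          rw [hss, max_eq_right h.le]
          exact (Measure.restrict_congr_set Ioi_ae_eq_Ici).symm
      rw [hset, lint_inv_cube_tail (lt_max_iff.2 (Or.inl hx))]
      simp [Set.indicator_apply, ht, mul_comm]
    · have hz : ∀ u : ℝ, F (u, t) = 0 := fun u => by
        simp [key, Set.indicator_apply, ht]
      simp [hz, Set.indicator_apply, ht]
  have swap : ∫⁻ u, ∫⁻ t, F (u, t) = ∫⁻ t, ∫⁻ u, F (u, t) :=
    lintegral_lintegral_swap hF.aemeasurable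
  calc
    ∫⁻ u in Ioi x, ENNReal.ofReal ((u ^ 3)⁻¹) * (∫⁻ t in Ioc 0 u, ENNReal.ofReal (Δ t))
        = ∫⁻ u, ∫⁻ t, F (u, t) := by
          simp_rw [e1]; rw [lintegral_indicator measurableSet_Ioi]
    _ = ∫⁻ t, ∫⁻ u, F (u, t) := swap
    _ = ∫⁻ t in Ioi 0,
          ENNReal.ofReal (Δ t) * ENNReal.ofReal (((max x t) ^ 2)⁻¹ / 2) := by
          simp_rw [e3]; rw [lintegral_indicator measurableSet_Ioi]
    _ = (∫⁻ t in Ioc 0 x, ENNReal.ofReal (Δ t)) * ENNReal.ofReal ((x ^ 2)⁻¹ / 2)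
        + ∫⁻ t in Ioi x, ENNReal.ofReal (Δ t) * ENNReal.ofReal ((t ^ 2)⁻¹ / 2) := by
      rw [← Set.Ioc_union_Ioi_eq_Ioi hx.le,
        lintegral_union measurableSet_Ioi
          (by rw [Set.disjoint_left]; exact fun u h1 h2 => absurd h1.2 (not_le.2 h2))]
      congr 1
      · rw [setLIntegral_congr_fun_ae measurableSet_Ioc (ae_of_all _ fun t ht => by
          rw [max_eq_left ht.2])]
        exact lintegral_mul_const' _ _ ENNReal.ofReal_ne_top
      · exact setLIntegral_congr_fun_ae measurableSet_Ioi (ae_of_all _ fun t (ht : x < t) => by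
          rw [max_eq_right ht.le])


private lemma fubiniB (Δ : ℝ → ℝ) (hmeas : Measurable Δ) {x : ℝ} (hx : 0 < x) :
    ∫⁻ u in Ioc 0 x, ENNReal.ofReal u *
        (∫⁻ t in Ioi u, ENNReal.ofReal (Δ t) * ENNReal.ofReal ((t ^ 2)⁻¹))
      = (∫⁻ t in Ioc 0 x, ENNReal.ofReal (Δ t)) * ENNReal.ofReal 2⁻¹
        + (∫⁻ t in Ioi x, ENNReal.ofReal (Δ t) * ENNReal.ofReal ((t ^ 2)⁻¹))
            * ENNReal.ofReal (x ^ 2 / 2) := by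
  set g : ℝ → ℝ≥0∞ := fun t => ENNReal.ofReal (Δ t) * ENNReal.ofReal ((t ^ 2)⁻¹) with hg
  have hgmeas : Measurable g :=
    (ENNReal.measurable_ofReal.comp hmeas).mul
      (ENNReal.measurable_ofReal.comp ((measurable_id.pow_const 2).inv))
  set S : Set (ℝ × ℝ) := {p : ℝ × ℝ | p.1 < p.2} with hS
  set F : ℝ × ℝ → ℝ≥0∞ := fun p =>
    (Ioc 0 x).indicator (fun u => ENNReal.ofReal u) p.1 * S.indicator (fun p => g p.2) p
    with hFdef
  have hSmeas : MeasurableSet S := measurableSet_lt measurable_fst measurable_snd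
  have hF : Measurable F := by
    apply Measurable.mul
    · exact ((ENNReal.measurable_ofReal.comp measurable_id).indicator
        measurableSet_Ioc).comp measurable_fst
    · exact (hgmeas.comp measurable_snd).indicator hSmeas
  have key : ∀ u t : ℝ, F (u, t) =
      (Ioc 0 x).indicator (fun u => ENNReal.ofReal u) u *
        (Ioi u).indicator g t := by
    intro u t
    simp [hFdef, hS, Set.indicator_apply, Set.mem_Ioi, Set.mem_setOf_eq]
  have e1 : ∀ u : ℝ, ∫⁻ t, F (u, t) =
      (Ioc 0 x).indicator (fun u => ENNReal.ofReal u * ∫⁻ t in Ioi u, g t) u := by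
    intro u
    simp_rw [key]
    rw [lintegral_const_mul' _ _ (by by_cases h : u ∈ Ioc 0 x <;> simp [h])]
    rw [lintegral_indicator measurableSet_Ioi]
    by_cases h : u ∈ Ioc 0 x <;> simp [h]
  have e3 : ∀ t : ℝ, ∫⁻ u, F (u, t) =
      (Ioi 0).indicator (fun t => g t * ENNReal.ofReal ((min x t) ^ 2 / 2)) t := by
    intro t
    by_cases ht : 0 < t
    · have hru : ∀ u : ℝ, F (u, t) =
          (Ioc 0 x ∩ Iio t).indicator (fun u => ENNReal.ofReal u) u * g t := by
        intro u
        by_cases h1 : u ∈ Ioc 0 x <;> by_cases h2 : u < t <;>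
          simp [key, Set.indicator_apply, h1, h2, Set.mem_Ioi, Set.mem_Iio, mul_comm]
      simp_rw [hru]
      rw [lintegral_mul_const' _ _ (by
        have : g t ≠ ⊤ := ENNReal.mul_ne_top ENNReal.ofReal_ne_top ENNReal.ofReal_ne_top
        exact this),
        lintegral_indicator (measurableSet_Ioc.inter measurableSet_Iio)]
      have hset : volume.restrict (Ioc 0 x ∩ Iio t) = volume.restrict (Ioc 0 (min x t)) := by
        rcases le_or_gt t x with h | h
        · have hss : Ioc 0 x ∩ Iio t = Ioo 0 t := by
            ext u
            simp only [Set.mem_inter_iff, Set.mem_Ioc, Set.mem_Iio, Set.mem_Ioo]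
            exact ⟨fun ⟨⟨h1, _⟩, h3⟩ => ⟨h1, h3⟩, fun ⟨h1, h3⟩ => ⟨⟨h1, h3.le.trans h⟩, h3⟩⟩
          rw [hss, min_eq_right h]
          exact Measure.restrict_congr_set Ioo_ae_eq_Ioc
        · have hss : Ioc 0 x ∩ Iio t = Ioc 0 x :=
            Set.inter_eq_self_of_subset_left (fun u (hu : u ∈ Ioc 0 x) => hu.2.trans_lt h)
          rw [hss, min_eq_left h.le]
      rw [hset, lint_id_Ioc (lt_min hx ht)]
      simp [Set.indicator_apply, ht, mul_comm]
    · have hz : ∀ u : ℝ, F (u, t) = 0 := fun u => by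
        rw [key]
        rcases le_or_gt u 0 with h | h
        · rw [Set.indicator_of_notMem (fun hc : u ∈ Ioc 0 x => absurd hc.1 (not_lt.2 h)),
            zero_mul]
        · have hnm : t ∉ Ioi u := fun hc => ht (h.trans hc)
          rw [Set.indicator_of_notMem hnm, mul_zero]
      simp [hz, Set.indicator_apply, ht]
  have swap : ∫⁻ u, ∫⁻ t, F (u, t) = ∫⁻ t, ∫⁻ u, F (u, t) :=
    lintegral_lintegral_swap hF.aemeasurable
  calc
    ∫⁻ u in Ioc 0 x, ENNReal.ofReal u * (∫⁻ t in Ioi u, g t)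
        = ∫⁻ u, ∫⁻ t, F (u, t) := by
          simp_rw [e1]; rw [lintegral_indicator measurableSet_Ioc]
    _ = ∫⁻ t, ∫⁻ u, F (u, t) := swap
    _ = ∫⁻ t in Ioi 0, g t * ENNReal.ofReal ((min x t) ^ 2 / 2) := by
          simp_rw [e3]; rw [lintegral_indicator measurableSet_Ioi]
    _ = (∫⁻ t in Ioc 0 x, ENNReal.ofReal (Δ t)) * ENNReal.ofReal 2⁻¹
        + (∫⁻ t in Ioi x, g t) * ENNReal.ofReal (x ^ 2 / 2) := by
      rw [← Set.Ioc_union_Ioi_eq_Ioi hx.le,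
        lintegral_union measurableSet_Ioi
          (by rw [Set.disjoint_left]; exact fun u h1 h2 => absurd h1.2 (not_le.2 h2))]
      congr 1
      · rw [show (∫⁻ t in Ioc 0 x, g t * ENNReal.ofReal ((min x t) ^ 2 / 2))
            = ∫⁻ t in Ioc 0 x, ENNReal.ofReal (Δ t) * ENNReal.ofReal 2⁻¹ from
          setLIntegral_congr_fun_ae measurableSet_Ioc (ae_of_all _ fun t ht => by
            have ht0 : (t:ℝ) ≠ 0 := ht.1.ne'
            rw [min_eq_right ht.2, hg, mul_assoc,
              ← ENNReal.ofReal_mul (inv_nonneg.2 (sq_nonneg t))]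
            congr 1
            field_simp)]
        exact lintegral_mul_const' _ _ ENNReal.ofReal_ne_top
      · rw [show (∫⁻ t in Ioi x, g t * ENNReal.ofReal ((min x t) ^ 2 / 2))
            = ∫⁻ t in Ioi x, g t * ENNReal.ofReal (x ^ 2 / 2) from
          setLIntegral_congr_fun_ae measurableSet_Ioi (ae_of_all _ fun t (ht : x < t) => by
            rw [min_eq_left ht.le])]
        exact lintegral_mul_const' _ _ ENNReal.ofReal_ne_top
theorem stmt19 (Δ : ℝ → ℝ) (hmeas : Measurable Δ) (hnonneg : ∀ x : ℝ, 0 ≤ Δ x)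
    (hint : ∀ x : ℝ, 0 < x → IntegrableOn Δ (Set.Ioc (0 : ℝ) x))
    (D : ℝ → ℝ) (hD : ∀ x : ℝ, D x = ∫ u in Set.Ioc (0 : ℝ) x, Δ u)
    (hbdd : ∃ C : ℝ, ∀ x : ℝ, 0 < x → D x / x ≤ C)
    (v : ℝ) (hv : 0 ≤ v) :
    Tendsto (fun x : ℝ => D x / x) (nhdsWithin (0 : ℝ) (Set.Ioi (0 : ℝ))) (nhds v) ↔
      Tendsto (fun x : ℝ => x * ∫ u in Set.Ioi x, Δ u / u ^ 2)
        (nhdsWithin (0 : ℝ) (Set.Ioi (0 : ℝ))) (nhds v) := by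
  obtain ⟨C, hC⟩ := hbdd
  -- basic facts about D
  have hDnn : ∀ y : ℝ, 0 ≤ D y := fun y => by
    rw [hD]; exact setIntegral_nonneg measurableSet_Ioc fun t _ => hnonneg t
  have hCnn : 0 ≤ C := le_trans (by simpa using div_nonneg (hDnn 1) zero_le_one) (hC 1 one_pos)
  have hDle : ∀ y : ℝ, 0 < y → D y ≤ C * y := fun y hy => by
    have := hC y hy; rwa [div_le_iff₀ hy] at this
  have hDmono : Monotone D := by
    intro a b hab
    rcases le_or_gt b 0 with hb | hb
    · have ha : a ≤ 0 := hab.trans hb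
      rw [hD a, hD b, Set.Ioc_eq_empty (not_lt.2 ha), Set.Ioc_eq_empty (not_lt.2 hb)]
    · rcases le_or_gt a 0 with ha | ha
      · rw [hD a, Set.Ioc_eq_empty (not_lt.2 ha)]
        simpa using hDnn b
      · rw [hD a, hD b]
        exact setIntegral_mono_set (hint b hb)
          ((ae_restrict_iff' measurableSet_Ioc).2 (ae_of_all _ fun t _ => hnonneg t))
          (HasSubset.Subset.eventuallyLE (Set.Ioc_subset_Ioc_right hab))
  have hDmeas : Measurable D := hDmono.measurable
  have hDl : ∀ y : ℝ, 0 < y →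
      (∫⁻ t in Ioc (0:ℝ) y, ENNReal.ofReal (Δ t)) = ENNReal.ofReal (D y) := fun y hy => by
    rw [hD]
    exact (MeasureTheory.ofReal_integral_eq_lintegral_ofReal (hint y hy)
      ((ae_restrict_iff' measurableSet_Ioc).2 (ae_of_all _ fun t _ => hnonneg t))).symm
  set G : ℝ → ℝ := fun y => ∫ u in Ioi y, Δ u / u ^ 2 with hGdef
  set Lf : ℝ → ℝ≥0∞ :=
    fun y => ∫⁻ t in Ioi y, ENNReal.ofReal (Δ t) * ENNReal.ofReal ((t ^ 2)⁻¹) with hLfdef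
  have hGnn : ∀ y : ℝ, 0 ≤ G y := fun y =>
    setIntegral_nonneg measurableSet_Ioi fun u _ => div_nonneg (hnonneg u) (sq_nonneg u)
  have hLanti : Antitone Lf := fun a b hab => lintegral_mono_set (Ioi_subset_Ioi hab)
  have hLmeas : Measurable Lf := hLanti.measurable
  -- bound on ∫⁻ (u³)⁻¹ D u
  have hIle : ∀ y : ℝ, 0 < y →
      (∫⁻ u in Ioi y, ENNReal.ofReal ((u ^ 3)⁻¹) * ENNReal.ofReal (D u))
        ≤ ENNReal.ofReal C * ENNReal.ofReal y⁻¹ := by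
    intro y hy
    have h1 : (∫⁻ u in Ioi y, ENNReal.ofReal ((u ^ 3)⁻¹) * ENNReal.ofReal (D u))
        ≤ ∫⁻ u in Ioi y, ENNReal.ofReal C * ENNReal.ofReal ((u ^ 2)⁻¹) := by
      apply setLIntegral_mono' measurableSet_Ioi
      intro u (hu : y < u)
      have hu0 : 0 < u := hy.trans hu
      calc ENNReal.ofReal ((u ^ 3)⁻¹) * ENNReal.ofReal (D u)
          ≤ ENNReal.ofReal ((u ^ 3)⁻¹) * ENNReal.ofReal (C * u) :=
            mul_le_mul_right (ENNReal.ofReal_le_ofReal (hDle u hu0)) _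
        _ = ENNReal.ofReal C * ENNReal.ofReal ((u ^ 2)⁻¹) := by
            rw [← ENNReal.ofReal_mul (inv_nonneg.2 (pow_nonneg hu0.le 3)),
              ← ENNReal.ofReal_mul hCnn]
            congr 1
            field_simp
    rw [lintegral_const_mul' _ _ ENNReal.ofReal_ne_top, lint_inv_sq_tail hy] at h1
    exact h1
  -- identity A in ℝ≥0∞ form
  have hfubA : ∀ y : ℝ, 0 < y →
      ENNReal.ofReal (D y) * ENNReal.ofReal ((y ^ 2)⁻¹ / 2) + Lf y * ENNReal.ofReal 2⁻¹
        = ∫⁻ u in Ioi y, ENNReal.ofReal ((u ^ 3)⁻¹) * ENNReal.ofReal (D u) := by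
    intro y hy
    have hA := fubiniA Δ hmeas hy
    rw [setLIntegral_congr_fun_ae measurableSet_Ioi (ae_of_all _ fun u (hu : y < u) => by
        rw [hDl u (hy.trans hu)]), hDl y hy] at hA
    have hsplit : (∫⁻ t in Ioi y, ENNReal.ofReal (Δ t) * ENNReal.ofReal ((t ^ 2)⁻¹ / 2))
        = Lf y * ENNReal.ofReal 2⁻¹ := by
      rw [setLIntegral_congr_fun_ae measurableSet_Ioi (ae_of_all _ fun t (ht : y < t) => by
        rw [show ((t:ℝ) ^ 2)⁻¹ / 2 = (t ^ 2)⁻¹ * 2⁻¹ by ring,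
          ENNReal.ofReal_mul (inv_nonneg.2 (sq_nonneg t)), ← mul_assoc])]
      exact lintegral_mul_const' _ _ ENNReal.ofReal_ne_top
    rw [hsplit] at hA
    exact hA.symm
  have hLfin : ∀ y : ℝ, 0 < y → Lf y ≠ ⊤ := by
    intro y hy hcon
    have h1 : Lf y * ENNReal.ofReal 2⁻¹ ≤ ENNReal.ofReal C * ENNReal.ofReal y⁻¹ :=
      le_trans (le_add_self) ((hfubA y hy).le.trans (hIle y hy))
    rw [hcon, ENNReal.top_mul (by simp)] at h1
    exact (ENNReal.mul_lt_top ENNReal.ofReal_lt_top ENNReal.ofReal_lt_top).ne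
      (top_le_iff.1 h1)
  have hGcong : ∀ y : ℝ, 0 < y →
      (∫⁻ u in Ioi y, ENNReal.ofReal (Δ u / u ^ 2)) = Lf y := by
    intro y hy
    exact setLIntegral_congr_fun_ae measurableSet_Ioi (ae_of_all _ fun u (hu : y < u) => by
      rw [div_eq_mul_inv, ENNReal.ofReal_mul (hnonneg u)])
  have hGint : ∀ y : ℝ, 0 < y → IntegrableOn (fun u : ℝ => Δ u / u ^ 2) (Ioi y) := by
    intro y hy
    refine ⟨(hmeas.div (measurable_id.pow_const 2)).aestronglyMeasurable, ?_⟩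
    rw [hasFiniteIntegral_iff_ofReal
      (ae_of_all _ fun u => div_nonneg (hnonneg u) (sq_nonneg u))]
    rw [hGcong y hy]
    exact lt_top_iff_ne_top.2 (hLfin y hy)
  have hGeq : ∀ y : ℝ, 0 < y → ENNReal.ofReal (G y) = Lf y := by
    intro y hy
    rw [hGdef]
    rw [MeasureTheory.ofReal_integral_eq_lintegral_ofReal (hGint y hy)
      (ae_of_all _ fun u => div_nonneg (hnonneg u) (sq_nonneg u))]
    exact hGcong y hy
  -- real identity A: y * G y = 2 ∫_{s>1} D(ys)/(ys) s⁻² - D y / y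
  have hrealA : ∀ y : ℝ, 0 < y →
      y * G y = 2 * (∫ s in Ioi (1:ℝ), D (y * s) / (y * s) * ((s:ℝ) ^ 2)⁻¹) - D y / y := by
    intro y hy
    have hJnn : ∀ᵐ u ∂(volume.restrict (Ioi y)), 0 ≤ D u * ((u:ℝ) ^ 3)⁻¹ :=
      (ae_restrict_iff' measurableSet_Ioi).2 (ae_of_all _ fun u hu =>
        mul_nonneg (hDnn u) (inv_nonneg.2 (pow_nonneg (le_of_lt (hy.trans hu)) 3)))
    have hJl : (∫⁻ u in Ioi y, ENNReal.ofReal (D u * (u ^ 3)⁻¹))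
        = ∫⁻ u in Ioi y, ENNReal.ofReal ((u ^ 3)⁻¹) * ENNReal.ofReal (D u) :=
      setLIntegral_congr_fun_ae measurableSet_Ioi (ae_of_all _ fun u (hu : y < u) => by
        rw [mul_comm (D u), ENNReal.ofReal_mul (inv_nonneg.2
          (pow_nonneg (le_of_lt (hy.trans hu)) 3))])
    have hJint : IntegrableOn (fun u : ℝ => D u * ((u:ℝ) ^ 3)⁻¹) (Ioi y) := by
      refine ⟨(hDmeas.mul ((measurable_id.pow_const 3).inv)).aestronglyMeasurable, ?_⟩
      rw [hasFiniteIntegral_iff_ofReal hJnn, hJl]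
      exact lt_of_le_of_lt (hIle y hy)
        (ENNReal.mul_lt_top ENNReal.ofReal_lt_top ENNReal.ofReal_lt_top)
    set J := ∫ u in Ioi y, D u * ((u:ℝ) ^ 3)⁻¹ with hJ
    have hJeq : ENNReal.ofReal J
        = ∫⁻ u in Ioi y, ENNReal.ofReal ((u ^ 3)⁻¹) * ENNReal.ofReal (D u) := by
      rw [hJ, MeasureTheory.ofReal_integral_eq_lintegral_ofReal hJint hJnn, hJl]
    have hA := hfubA y hy
    rw [← hJeq, ← hGeq y hy, ← ENNReal.ofReal_mul (hDnn y), ← ENNReal.ofReal_mul (hGnn y),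
      ← ENNReal.ofReal_add (mul_nonneg (hDnn y) (div_nonneg (inv_nonneg.2 (sq_nonneg y)) (by norm_num)))
        (mul_nonneg (hGnn y) (by norm_num))] at hA
    have hJval : J = D y * ((y ^ 2)⁻¹ / 2) + G y * 2⁻¹ := by
      have hJnn' : 0 ≤ J := integral_nonneg_of_ae hJnn
      exact ((ENNReal.ofReal_eq_ofReal_iff
        (add_nonneg (mul_nonneg (hDnn y) (div_nonneg (inv_nonneg.2 (sq_nonneg y)) (by norm_num)))
          (mul_nonneg (hGnn y) (by norm_num))) hJnn').1 hA).symm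
    -- change of variables
    have hCV : (∫ s in Ioi (1:ℝ), D (y * s) * (((y * s):ℝ) ^ 3)⁻¹) = y⁻¹ * J := by
      have := integral_comp_mul_left_Ioi (fun u : ℝ => D u * ((u:ℝ) ^ 3)⁻¹) 1 hy
      simpa [mul_one, smul_eq_mul] using this
    have hcong2 : (∫ s in Ioi (1:ℝ), D (y * s) / (y * s) * ((s:ℝ) ^ 2)⁻¹)
        = ∫ s in Ioi (1:ℝ), y ^ 2 * (D (y * s) * (((y * s):ℝ) ^ 3)⁻¹) := by
      refine setIntegral_congr_fun measurableSet_Ioi fun s (hs : 1 < s) => ?_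
      have hs0 : (0:ℝ) < s := lt_trans one_pos hs
      field_simp
    rw [hcong2, MeasureTheory.integral_const_mul, hCV, hJval]
    field_simp
    ring
  have hxGle : ∀ y : ℝ, 0 < y → y * G y ≤ 2 * C := by
    intro y hy
    have h1 : Lf y * ENNReal.ofReal 2⁻¹ ≤ ENNReal.ofReal C * ENNReal.ofReal y⁻¹ :=
      le_trans le_add_self ((hfubA y hy).le.trans (hIle y hy))
    have h2 : Lf y ≤ ENNReal.ofReal C * ENNReal.ofReal y⁻¹ * ENNReal.ofReal 2 := by
      have h3 := mul_le_mul_left h1 (ENNReal.ofReal 2)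
      rwa [mul_assoc, ← ENNReal.ofReal_mul (by norm_num), show (2:ℝ)⁻¹ * 2 = 1 by norm_num,
        ENNReal.ofReal_one, mul_one] at h3
    have h4 : ENNReal.ofReal (y * G y) ≤ ENNReal.ofReal (2 * C) := by
      rw [ENNReal.ofReal_mul hy.le, hGeq y hy]
      calc ENNReal.ofReal y * Lf y
          ≤ ENNReal.ofReal y * (ENNReal.ofReal C * ENNReal.ofReal y⁻¹ * ENNReal.ofReal 2) :=
            mul_le_mul_right h2 _
        _ = ENNReal.ofReal (y * (C * y⁻¹ * 2)) := by
            rw [← ENNReal.ofReal_mul hCnn, ← ENNReal.ofReal_mul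
              (mul_nonneg hCnn (inv_nonneg.2 hy.le)), ← ENNReal.ofReal_mul hy.le]
        _ = ENNReal.ofReal (2 * C) := by
            congr 1
            field_simp
    exact (ENNReal.ofReal_le_ofReal_iff (by positivity)).1 h4
  -- real identity B
  have hGm : Measurable fun u : ℝ => (Lf u).toReal := hLmeas.ennreal_toReal
  have hGLf : ∀ u : ℝ, 0 < u → G u = (Lf u).toReal := fun u hu => by
    rw [← hGeq u hu]; exact (ENNReal.toReal_ofReal (hGnn u)).symm
  have hrealB : ∀ y : ℝ, 0 < y →
      D y / y = 2 * (∫ s in Ioc (0:ℝ) 1, (y * s) * G (y * s)) - y * G y := by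
    intro y hy
    have hNnnae : ∀ᵐ u ∂(volume.restrict (Ioc (0:ℝ) y)), 0 ≤ u * G u :=
      (ae_restrict_iff' measurableSet_Ioc).2 (ae_of_all _ fun u hu =>
        mul_nonneg hu.1.le (hGnn u))
    have hNcong : (∫⁻ u in Ioc (0:ℝ) y, ENNReal.ofReal (u * G u))
        = ∫⁻ u in Ioc (0:ℝ) y, ENNReal.ofReal u *
            (∫⁻ t in Ioi u, ENNReal.ofReal (Δ t) * ENNReal.ofReal ((t ^ 2)⁻¹)) :=
      setLIntegral_congr_fun_ae measurableSet_Ioc (ae_of_all _ fun u hu => by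
        rw [ENNReal.ofReal_mul hu.1.le, hGeq u hu.1, hLfdef])
    have hNfin : (∫⁻ u in Ioc (0:ℝ) y, ENNReal.ofReal (u * G u)) < ⊤ := by
      rw [hNcong, fubiniB Δ hmeas hy, hDl y hy]
      refine ENNReal.add_lt_top.2 ⟨?_, ?_⟩
      · exact ENNReal.mul_lt_top ENNReal.ofReal_lt_top ENNReal.ofReal_lt_top
      · exact ENNReal.mul_lt_top (lt_top_iff_ne_top.2 (hLfin y hy)) ENNReal.ofReal_lt_top
    have hNint : IntegrableOn (fun u : ℝ => u * G u) (Ioc (0:ℝ) y) := by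
      constructor
      · apply (measurable_id.mul hGm).aestronglyMeasurable.congr
        refine (ae_restrict_iff' measurableSet_Ioc).mpr (ae_of_all _ fun u hu => ?_)
        simp [hGLf u hu.1]
      · rw [hasFiniteIntegral_iff_ofReal hNnnae]
        exact hNfin
    have hNl : ENNReal.ofReal (∫ u in Ioc (0:ℝ) y, u * G u)
        = ENNReal.ofReal (D y) * ENNReal.ofReal 2⁻¹
          + ENNReal.ofReal (G y) * ENNReal.ofReal (y ^ 2 / 2) := by
      rw [MeasureTheory.ofReal_integral_eq_lintegral_ofReal hNint hNnnae, hNcong,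
        fubiniB Δ hmeas hy, hDl y hy, hGeq y hy, hLfdef]
    rw [← ENNReal.ofReal_mul (hDnn y), ← ENNReal.ofReal_mul (hGnn y),
      ← ENNReal.ofReal_add (mul_nonneg (hDnn y) (by norm_num))
        (mul_nonneg (hGnn y) (div_nonneg (sq_nonneg y) (by norm_num)))] at hNl
    have hNval : (∫ u in Ioc (0:ℝ) y, u * G u) = D y * 2⁻¹ + G y * (y ^ 2 / 2) :=
      (ENNReal.ofReal_eq_ofReal_iff (integral_nonneg_of_ae hNnnae)
        (add_nonneg (mul_nonneg (hDnn y) (by norm_num))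
          (mul_nonneg (hGnn y) (div_nonneg (sq_nonneg y) (by norm_num))))).1 hNl
    have hCV : (∫ s in Ioc (0:ℝ) 1, (y * s) * G (y * s))
        = y⁻¹ * ∫ u in Ioc (0:ℝ) y, u * G u := by
      have h01 : (∫ s in Ioc (0:ℝ) 1, (y * s) * G (y * s))
          = ∫ s in (0:ℝ)..1, (fun u : ℝ => u * G u) (y * s) :=
        (intervalIntegral.integral_of_le zero_le_one).symm
      rw [h01, intervalIntegral.integral_comp_mul_left (fun u : ℝ => u * G u) hy.ne',
        mul_zero, mul_one, smul_eq_mul, intervalIntegral.integral_of_le hy.le]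
    rw [hCV, hNval]
    field_simp
    ring
  -- scaling tendsto helper
  have hscale : ∀ s : ℝ, 0 < s →
      Tendsto (fun x : ℝ => x * s) (nhdsWithin 0 (Ioi 0)) (nhdsWithin 0 (Ioi 0)) := by
    intro s hs
    apply tendsto_nhdsWithin_of_tendsto_nhds_of_eventually_within
    · have h1 : Tendsto (fun x : ℝ => x * s) (nhds 0) (nhds (0 * s)) :=
        (tendsto_id.mul_const s)
      rw [zero_mul] at h1
      exact h1.mono_left nhdsWithin_le_nhds
    · filter_upwards [self_mem_nhdsWithin] with x (hx : 0 < x)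
      exact mul_pos hx hs
  constructor
  · -- forward direction
    intro h
    have hb_int : IntegrableOn (fun s : ℝ => C * ((s:ℝ) ^ 2)⁻¹) (Ioi (1:ℝ)) := by
      apply Integrable.const_mul
      refine (integrableOn_Ioi_rpow_of_lt (show (-2:ℝ) < -1 by norm_num) one_pos).congr_fun
        (fun s hs => ?_) measurableSet_Ioi
      rw [show (-2:ℝ) = -((2:ℕ):ℝ) by norm_num]
      dsimp only
      rw [← pow_inv_eq_rpow (lt_trans one_pos hs) 2]
    have hint1 : (∫ s in Ioi (1:ℝ), ((s:ℝ) ^ 2)⁻¹) = 1 := by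
      rw [setIntegral_congr_fun measurableSet_Ioi (fun s (hs : 1 < s) =>
        pow_inv_eq_rpow (lt_trans one_pos hs) 2),
        integral_Ioi_rpow_of_lt (show -((2:ℕ):ℝ) < -1 by norm_num) one_pos]
      norm_num
    have hDCT : Tendsto (fun x : ℝ => ∫ s in Ioi (1:ℝ), D (x * s) / (x * s) * ((s:ℝ) ^ 2)⁻¹)
        (nhdsWithin 0 (Ioi 0)) (nhds (∫ s in Ioi (1:ℝ), v * ((s:ℝ) ^ 2)⁻¹)) := by
      apply tendsto_integral_filter_of_dominated_convergence
        (bound := fun s : ℝ => C * ((s:ℝ) ^ 2)⁻¹)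
      · filter_upwards [self_mem_nhdsWithin] with x (hx : 0 < x)
        exact (((hDmeas.comp (measurable_id.const_mul x)).div
          (measurable_id.const_mul x)).mul
          ((measurable_id.pow_const 2).inv)).aestronglyMeasurable
      · filter_upwards [self_mem_nhdsWithin] with x (hx : 0 < x)
        refine (ae_restrict_iff' measurableSet_Ioi).2 (ae_of_all _ fun s (hs : 1 < s) => ?_)
        have hxs : 0 < x * s := mul_pos hx (lt_trans one_pos hs)
        have h1 : 0 ≤ D (x * s) / (x * s) * ((s:ℝ) ^ 2)⁻¹ :=
          mul_nonneg (div_nonneg (hDnn _) hxs.le) (inv_nonneg.2 (sq_nonneg s))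
        rw [Real.norm_of_nonneg h1]
        exact mul_le_mul_of_nonneg_right (hC _ hxs) (inv_nonneg.2 (sq_nonneg s))
      · exact hb_int
      · refine (ae_restrict_iff' measurableSet_Ioi).2 (ae_of_all _ fun s (hs : 1 < s) => ?_)
        exact (h.comp (hscale s (lt_trans one_pos hs))).mul_const _
    rw [show (∫ s in Ioi (1:ℝ), v * ((s:ℝ) ^ 2)⁻¹) = v by
      rw [MeasureTheory.integral_const_mul, hint1, mul_one]] at hDCT
    have h2 := (hDCT.const_mul 2).sub h
    rw [show 2 * v - v = v by ring] at h2
    apply h2.congr'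
    filter_upwards [self_mem_nhdsWithin] with x (hx : 0 < x)
    exact (hrealA x hx).symm
  · -- converse direction
    intro h
    have hb_int : IntegrableOn (fun _ : ℝ => 2 * C) (Ioc (0:ℝ) 1) :=
      integrableOn_const measure_Ioc_lt_top.ne
    have hDCT : Tendsto (fun x : ℝ => ∫ s in Ioc (0:ℝ) 1, (x * s) * G (x * s))
        (nhdsWithin 0 (Ioi 0)) (nhds (∫ s in Ioc (0:ℝ) 1, v)) := by
      apply tendsto_integral_filter_of_dominated_convergence
        (bound := fun _ : ℝ => 2 * C)
      · filter_upwards [self_mem_nhdsWithin] with x (hx : 0 < x)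
        apply ((measurable_id.const_mul x).mul
          (hGm.comp (measurable_id.const_mul x))).aestronglyMeasurable.congr
        refine (ae_restrict_iff' measurableSet_Ioc).mpr (ae_of_all _ fun s hs => ?_)
        simp [hGLf (x * s) (mul_pos hx hs.1)]
      · filter_upwards [self_mem_nhdsWithin] with x (hx : 0 < x)
        refine (ae_restrict_iff' measurableSet_Ioc).2 (ae_of_all _ fun s hs => ?_)
        have hxs : 0 < x * s := mul_pos hx hs.1
        rw [Real.norm_of_nonneg (mul_nonneg hxs.le (hGnn _))]
        exact hxGle _ hxs
      · exact hb_int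
      · refine (ae_restrict_iff' measurableSet_Ioc).2 (ae_of_all _ fun s hs => ?_)
        exact h.comp (hscale s hs.1)
    rw [show (∫ _ in Ioc (0:ℝ) 1, v) = v by
      simp [Measure.restrict_apply, Real.volume_Ioc]] at hDCT
    have h2 := (hDCT.const_mul 2).sub h
    rw [show 2 * v - v = v by ring] at h2
    apply h2.congr'
    filter_upwards [self_mem_nhdsWithin] with x (hx : 0 < x)
    exact (hrealB x hx).symm
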